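/- Let p_1,…,p_n : ℝ^k → ℝ be continuously differentiable and L-positively homogeneous (L > 0), let ℓ be the exponential or logistic loss, and 𝓛(W) = Σ_i ℓ(p_i(W)). Let W : [0,∞) → ℝ^k be any curve with 𝓛(W_t) < ℓ(0) for all t, ‖W_t‖ → ∞, and α(W_t)/‖W_t‖^L → a for some a ∈ ℝ, where α(W) = ℓ^{−1}(𝓛(W)). Then lim_{t→∞} ⟨∇α(W_t), W_t⟩/‖W_t‖^L = a·L. -/

import Mathlib

set_option maxHeartbeats 1000000

open Filter

open scoped RealInnerProductSpace

lemma lem_xexp (y : ℝ) : y * Real.exp (-y) ≤ 1 := by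
  have h1 : y + 1 ≤ Real.exp y := Real.add_one_le_exp y
  have h2 : Real.exp (-y) * Real.exp y = 1 := by rw [← Real.exp_add]; simp
  have h3 := Real.exp_pos (-y)
  nlinarith

lemma lem_subadd {ι : Type*} (t : Finset ι) (f : ι → ℝ) (hf : ∀ i ∈ t, 0 ≤ f i) :
    1 - Real.exp (-(∑ i ∈ t, f i)) ≤ ∑ i ∈ t, (1 - Real.exp (-(f i))) := by
  induction t using Finset.cons_induction with
  | empty => simp
  | cons a s ha ih =>
    rw [Finset.sum_cons, Finset.sum_cons]
    have hfs : ∀ i ∈ s, 0 ≤ f i := fun i hi => hf i (Finset.mem_cons_of_mem hi)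
    have ih2 := ih hfs
    have ha0 : 0 ≤ f a := hf a (Finset.mem_cons_self a s)
    have e1 : Real.exp (-(f a + ∑ i ∈ s, f i)) = Real.exp (-f a) * Real.exp (-(∑ i ∈ s, f i)) := by
      rw [← Real.exp_add]; ring_nf
    have h1 : Real.exp (-f a) ≤ 1 := Real.exp_le_one_iff.mpr (by linarith)
    have h2 : Real.exp (-(∑ i ∈ s, f i)) ≤ 1 := Real.exp_le_one_iff.mpr (by
      have : 0 ≤ ∑ i ∈ s, f i := Finset.sum_nonneg hfs
      linarith)
    have h3 := Real.exp_pos (-f a)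
    have h4 := Real.exp_pos (-(∑ i ∈ s, f i))
    nlinarith [ih2]

lemma lem_exp_key (n : ℕ) (hn : 0 < n) (P : Fin n → ℝ)
    (S : ℝ) (hS : S = ∑ i, Real.exp (-(P i))) :
    S * (-Real.log S) ≤ ∑ i, Real.exp (-(P i)) * P i ∧
    ∑ i, Real.exp (-(P i)) * P i ≤ S * (-Real.log S) + n * S := by
  have hSpos : 0 < S := by
    rw [hS]
    exact Finset.sum_pos (fun i _ => Real.exp_pos _) ⟨⟨0, hn⟩, Finset.mem_univ _⟩
  have hPi : ∀ i, -Real.log S ≤ P i := by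
    intro i
    have h1 : Real.exp (-(P i)) ≤ S := by
      rw [hS]
      exact Finset.single_le_sum (f := fun j => Real.exp (-(P j))) (fun j _ => (Real.exp_pos _).le) (Finset.mem_univ i)
    have h2 : -(P i) ≤ Real.log S := by
      rw [← Real.exp_le_exp, Real.exp_log hSpos]; exact h1
    linarith
  have key : ∑ i, Real.exp (-(P i)) * P i
      = (∑ i, Real.exp (-(P i)) * (P i + Real.log S)) + S * (-Real.log S) := by
    rw [hS, Finset.sum_mul, ← Finset.sum_add_distrib]
    congr 1; ext i; ring
  constructor
  · rw [key]
    have : 0 ≤ ∑ i, Real.exp (-(P i)) * (P i + Real.log S) :=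
      Finset.sum_nonneg fun i _ => mul_nonneg (Real.exp_pos _).le (by linarith [hPi i])
    linarith
  · rw [key]
    have hterm : ∀ i, Real.exp (-(P i)) * (P i + Real.log S) ≤ S := by
      intro i
      set y := P i + Real.log S with hy
      have hy0 : 0 ≤ y := by linarith [hPi i]
      have hx : Real.exp (-(P i)) = S * Real.exp (-y) := by
        rw [hy, neg_add, Real.exp_add]
        rw [show Real.exp (-Real.log S) = S⁻¹ by rw [Real.exp_neg, Real.exp_log hSpos]]
        field_simp
      calc Real.exp (-(P i)) * y = S * (y * Real.exp (-y)) := by rw [hx]; ring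
        _ ≤ S * 1 := by
            exact mul_le_mul_of_nonneg_left (lem_xexp y) hSpos.le
        _ = S := mul_one S
    have : ∑ i, Real.exp (-(P i)) * (P i + Real.log S) ≤ ∑ _i : Fin n, S :=
      Finset.sum_le_sum fun i _ => hterm i
    simp only [Finset.sum_const, Finset.card_univ, Fintype.card_fin, nsmul_eq_mul] at this
    linarith

lemma lem_log_key (n : ℕ) (hn : 0 < n) (P : Fin n → ℝ)
    (S : ℝ) (hS : S = ∑ i, Real.log (1 + Real.exp (-(P i))))
    (hS2 : S < Real.log 2) :
    (1 - Real.exp (-S)) * (-Real.log (Real.exp S - 1))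
      ≤ ∑ i, (Real.exp (-(P i)) / (1 + Real.exp (-(P i)))) * P i ∧
    ∑ i, (Real.exp (-(P i)) / (1 + Real.exp (-(P i)))) * P i
      ≤ (1 - Real.exp (-S)) * (-Real.log (Real.exp S - 1)) + (2 * n + 2) * (1 - Real.exp (-S)) := by
  set x : Fin n → ℝ := fun i => Real.exp (-(P i)) with hx
  set s : Fin n → ℝ := fun i => Real.log (1 + x i) with hs
  have hxpos : ∀ i, 0 < x i := fun i => Real.exp_pos _
  have hspos : ∀ i, 0 < s i := fun i => Real.log_pos (by linarith [hxpos i])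
  have hSpos : 0 < S := by
    rw [hS]; exact Finset.sum_pos (fun i _ => hspos i) ⟨⟨0, hn⟩, Finset.mem_univ _⟩
  have hsle : ∀ i, s i ≤ S := by
    intro i
    rw [hS]
    exact Finset.single_le_sum (f := s) (fun j _ => (hspos j).le) (Finset.mem_univ i)
  have hexpS2 : Real.exp S < 2 := by
    rw [← Real.exp_log (show (0:ℝ) < 2 by norm_num)]
    exact Real.exp_lt_exp.mpr hS2
  set T : ℝ := Real.exp S - 1 with hT
  have hTpos : 0 < T := by
    rw [hT]; nlinarith [Real.add_one_le_exp S]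
  have hT1 : T < 1 := by simp [hT]; linarith
  set A : ℝ := -Real.log T with hA
  have hAnn : 0 ≤ A := by
    rw [hA]; simp
    exact Real.log_nonpos hTpos.le hT1.le
  have hexps : ∀ i, Real.exp (s i) = 1 + x i := fun i => Real.exp_log (by linarith [hxpos i])
  have hxT : ∀ i, x i ≤ T := by
    intro i
    have := Real.exp_le_exp.mpr (hsle i)
    rw [hexps i] at this
    simp [hT]; linarith
  have hPA : ∀ i, A ≤ P i := by
    intro i
    have h1 : Real.log (x i) ≤ Real.log T := Real.log_le_log (hxpos i) (hxT i)
    rw [hx] at h1; simp only [Real.log_exp] at h1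
    rw [hA]; linarith
  set w : Fin n → ℝ := fun i => x i / (1 + x i) with hw
  have hwalt : ∀ i, w i = 1 - Real.exp (-(s i)) := by
    intro i
    rw [hw]; simp only
    rw [hs]; simp only
    rw [Real.exp_neg, Real.exp_log (by linarith [hxpos i])]
    field_simp
    rw [div_eq_iff (by linarith [hxpos i] : (1 + x i) ≠ 0), sub_mul, one_div, inv_mul_cancel₀ (by linarith [hxpos i] : (1 + x i) ≠ 0)]; ring
  have hwnn : ∀ i, 0 ≤ w i := fun i => div_nonneg (hxpos i).le (by linarith [hxpos i])
  have hwx : ∀ i, w i ≤ x i := fun i => div_le_self (hxpos i).le (by linarith [hxpos i])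
  have hws : ∀ i, w i ≤ s i := by
    intro i
    rw [hwalt i]
    have := Real.add_one_le_exp (-(s i))
    linarith
  set D : ℝ := 1 - Real.exp (-S) with hD
  have hDpos : 0 < D := by
    rw [hD]
    have : Real.exp (-S) < 1 := Real.exp_lt_one_iff.mpr (by linarith)
    linarith
  have hsumwD : D ≤ ∑ i, w i := by
    have := lem_subadd Finset.univ s (fun i _ => (hspos i).le)
    rw [← hS] at this
    calc D ≤ ∑ i, (1 - Real.exp (-(s i))) := this
      _ = ∑ i, w i := by apply Finset.sum_congr rfl; intro i _; rw [hwalt i]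
  have hsumwS : ∑ i, w i ≤ S := by
    rw [hS]; exact Finset.sum_le_sum fun i _ => hws i
  have hTD : T = Real.exp S * D := by
    rw [hT, hD]
    have : Real.exp S * Real.exp (-S) = 1 := by rw [← Real.exp_add]; simp
    ring_nf; nlinarith []
  have hT2D : T ≤ 2 * D := by rw [hTD]; nlinarith [hDpos]
  have hTgeS : S ≤ T := by rw [hT]; linarith [Real.add_one_le_exp S]
  have hDS2 : S / 2 ≤ D := by
    -- D = T * exp(-S) ≥ S * (1/2)
    have h1 : D = T * Real.exp (-S) := by
      rw [hT, hD]
      have : Real.exp S * Real.exp (-S) = 1 := by rw [← Real.exp_add]; simp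
      nlinarith []
    have h2 : (1:ℝ)/2 ≤ Real.exp (-S) := by
      have h3 : Real.exp (-S) * Real.exp S = 1 := by rw [← Real.exp_add]; simp
      nlinarith [Real.exp_pos S, Real.exp_pos (-S)]
    nlinarith [hTgeS, hSpos]
  have hDleS : D ≤ S := by
    rw [hD]; linarith [Real.add_one_le_exp (-S)]
  have hAlogS : A ≤ -Real.log S := by
    rw [hA]
    have := Real.log_le_log hSpos hTgeS
    linarith
  have hSlogS : -(S * Real.log S) ≤ 1 := by
    have h1 : Real.log (1/S) ≤ 1/S - 1 := Real.log_le_sub_one_of_pos (by positivity)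
    rw [one_div, Real.log_inv] at h1
    have h2 : S * (-Real.log S) ≤ S * (1/S - 1) := by
      apply mul_le_mul_of_nonneg_left _ hSpos.le
      rw [one_div]; linarith
    have h3 : S * (1/S - 1) = 1 - S := by field_simp
    nlinarith
  have hSD2 : S - D ≤ S ^ 2 := by
    have h1 : Real.exp (-S) * (1 + S) ≤ 1 := by
      have h2 : 1 + S ≤ Real.exp S := by linarith [Real.add_one_le_exp S]
      have h3 : Real.exp (-S) * Real.exp S = 1 := by rw [← Real.exp_add]; simp
      nlinarith [Real.exp_pos (-S)]
    rw [hD]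
    nlinarith [Real.exp_pos (-S), hSpos]
  have hASD : A * (S - D) ≤ 2 * D := by
    have h1 : A * (S - D) ≤ A * S ^ 2 := by
      apply mul_le_mul_of_nonneg_left hSD2 hAnn
    have h2 : A * S ^ 2 ≤ (-Real.log S) * S ^ 2 := by
      apply mul_le_mul_of_nonneg_right hAlogS (by positivity)
    have h3 : (-Real.log S) * S ^ 2 = S * (-(S * Real.log S)) := by ring
    have h4 : S * (-(S * Real.log S)) ≤ S * 1 := mul_le_mul_of_nonneg_left hSlogS hSpos.le
    nlinarith [hDS2]
  -- exp(-A) = T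
  have hexpA : Real.exp (-A) = T := by
    rw [hA, neg_neg, Real.exp_log hTpos]
  constructor
  · -- lower bound
    have h1 : ∀ i, w i * A ≤ w i * P i := fun i =>
      mul_le_mul_of_nonneg_left (hPA i) (hwnn i)
    calc D * A ≤ (∑ i, w i) * A := mul_le_mul_of_nonneg_right hsumwD hAnn
      _ = ∑ i, w i * A := by rw [Finset.sum_mul]
      _ ≤ ∑ i, w i * P i := Finset.sum_le_sum fun i _ => h1 i
  · -- upper bound
    have hterm : ∀ i, w i * P i ≤ T + w i * A := by
      intro i
      have h1 : w i * (P i - A) ≤ x i * (P i - A) :=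
        mul_le_mul_of_nonneg_right (hwx i) (by linarith [hPA i])
      have h2 : x i * (P i - A) = T * ((P i - A) * Real.exp (-(P i - A))) := by
        rw [hx]; simp only
        rw [show (-(P i - A)) = -(P i) + A by ring, Real.exp_add,
          show Real.exp A = T⁻¹ by rw [← hexpA, ← Real.exp_neg, neg_neg]]
        field_simp
      have h3 : T * ((P i - A) * Real.exp (-(P i - A))) ≤ T * 1 :=
        mul_le_mul_of_nonneg_left (lem_xexp _) hTpos.le
      nlinarith [h1, h2, h3]
    calc ∑ i, w i * P i ≤ ∑ i, (T + w i * A) := Finset.sum_le_sum fun i _ => hterm i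
      _ = n * T + (∑ i, w i) * A := by
          rw [Finset.sum_add_distrib, Finset.sum_mul]
          simp [Finset.sum_const, Finset.card_univ]
      _ ≤ n * (2 * D) + S * A := by
          have := mul_le_mul_of_nonneg_right hsumwS hAnn
          have := mul_le_mul_of_nonneg_left hT2D (show (0:ℝ) ≤ n by positivity)
          nlinarith
      _ ≤ D * A + (2 * n + 2) * D := by nlinarith [hASD]

lemma lem_euler {k : ℕ} {f : EuclideanSpace ℝ (Fin k) → ℝ} (hf : ContDiff ℝ 1 f)
    {L : ℝ} (hhom : ∀ c : ℝ, 0 < c → ∀ V, f (c • V) = c ^ L * f V)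
    (V : EuclideanSpace ℝ (Fin k)) : fderiv ℝ f V V = L * f V := by
  have hd : HasFDerivAt f (fderiv ℝ f V) V :=
    (hf.differentiable one_ne_zero V).hasFDerivAt
  have h1 : HasDerivAt (fun c : ℝ => c • V) V 1 := by
    simpa using (hasDerivAt_id (1:ℝ)).smul_const V
  have hd' : HasFDerivAt f (fderiv ℝ f V) ((1:ℝ) • V) := by rwa [one_smul]
  have h2 : HasDerivAt (fun c : ℝ => f (c • V)) (fderiv ℝ f V V) 1 :=
    hd'.comp_hasDerivAt 1 h1
  have h3 : HasDerivAt (fun c : ℝ => c ^ L * f V) (L * f V) 1 := by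
    have := (Real.hasDerivAt_rpow_const (x := (1:ℝ)) (p := L) (Or.inl one_ne_zero)).mul_const (f V)
    simpa [Real.one_rpow] using this
  have h4 : (fun c : ℝ => c ^ L * f V) =ᶠ[nhds 1] fun c : ℝ => f (c • V) := by
    filter_upwards [Ioi_mem_nhds (show (0:ℝ) < 1 by norm_num)] with c hc
    exact (hhom c hc V).symm
  exact h2.unique (h3.congr_of_eventuallyEq h4.symm)

lemma lem_grad {k : ℕ} (f : EuclideanSpace ℝ (Fin k) → ℝ) (x y : EuclideanSpace ℝ (Fin k)) :
    @inner ℝ _ _ (gradient f x) y = fderiv ℝ f x y := by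
  rw [gradient, InnerProductSpace.toDual_symm_apply]

theorem statement_17
    (n k : ℕ) (hn : 0 < n) (L : ℝ) (hL : 0 < L)
    (p : Fin n → EuclideanSpace ℝ (Fin k) → ℝ)
    (hp : ∀ i, ContDiff ℝ 1 (p i))
    (hhom : ∀ i (c : ℝ), 0 < c → ∀ W, p i (c • W) = c ^ L * p i W)
    (ℓ : ℝ → ℝ)
    (hℓ : ℓ = (fun z => Real.exp (-z)) ∨ ℓ = fun z => Real.log (1 + Real.exp (-z)))
    (𝓛 : EuclideanSpace ℝ (Fin k) → ℝ)
    (h𝓛 : 𝓛 = fun W => ∑ i, ℓ (p i W))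
    (α : EuclideanSpace ℝ (Fin k) → ℝ)
    (hα : α = fun W => Function.invFun ℓ (𝓛 W))
    (W : ℝ → EuclideanSpace ℝ (Fin k))
    (hWloss : ∀ t : ℝ, 0 ≤ t → 𝓛 (W t) < ℓ 0)
    (hWnorm : Tendsto (fun t => ‖W t‖) atTop atTop)
    (a : ℝ)
    (ha : Tendsto (fun t => α (W t) / ‖W t‖ ^ L) atTop (nhds a)) :
    Tendsto (fun t => ⟪gradient α (W t), W t⟫ / ‖W t‖ ^ L) atTop (nhds (a * L)) := by
  have hnormL : Tendsto (fun t => ‖W t‖ ^ L) atTop atTop :=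
    (tendsto_rpow_atTop hL).comp hWnorm
  suffices hkey : ∃ C : ℝ, ∀ t : ℝ, 0 ≤ t →
      |(⟪gradient α (W t), W t⟫ : ℝ) - L * α (W t)| ≤ C by
    obtain ⟨C, hC⟩ := hkey
    have hCd : Tendsto (fun t => C / ‖W t‖ ^ L) atTop (nhds 0) :=
      tendsto_const_nhds.div_atTop hnormL
    have hCd' : Tendsto (fun t => -C / ‖W t‖ ^ L) atTop (nhds 0) :=
      tendsto_const_nhds.div_atTop hnormL
    have h1 : Tendsto (fun t => ((⟪gradient α (W t), W t⟫ : ℝ) - L * α (W t)) / ‖W t‖ ^ L)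
        atTop (nhds 0) := by
      apply tendsto_of_tendsto_of_tendsto_of_le_of_le' hCd' hCd
      · filter_upwards [eventually_ge_atTop (0:ℝ), hnormL.eventually_gt_atTop 0] with t ht hd
        have h2 := hC t ht
        rw [abs_le] at h2
        exact div_le_div_of_nonneg_right h2.1 hd.le -- try names
      · filter_upwards [eventually_ge_atTop (0:ℝ), hnormL.eventually_gt_atTop 0] with t ht hd
        have h2 := hC t ht
        rw [abs_le] at h2
        exact div_le_div_of_nonneg_right h2.2 hd.le
    have h2 : Tendsto (fun t => L * (α (W t) / ‖W t‖ ^ L)) atTop (nhds (L * a)) :=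
      ha.const_mul L
    have h3 := h1.add h2
    rw [zero_add] at h3
    have h4 : (fun t => (⟪gradient α (W t), W t⟫ : ℝ) / ‖W t‖ ^ L)
        = fun t => ((⟪gradient α (W t), W t⟫ : ℝ) - L * α (W t)) / ‖W t‖ ^ L
            + L * (α (W t) / ‖W t‖ ^ L) := by
      funext t; ring
    rw [h4, mul_comm a L]
    exact h3
  rcases hℓ with hE | hE
  · -- exponential loss
    have hS : ∀ V, 𝓛 V = ∑ i, Real.exp (-(p i V)) := by
      intro V; rw [h𝓛, hE]
    have hSpos : ∀ V, 0 < 𝓛 V := by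
      intro V; rw [hS]
      exact Finset.sum_pos (fun i _ => Real.exp_pos _) ⟨⟨0, hn⟩, Finset.mem_univ _⟩
    have hinj : Function.Injective ℓ := by
      rw [hE]; intro x y h
      simpa using Real.exp_injective h
    have hαeq : α = fun V => -Real.log (𝓛 V) := by
      rw [hα]; funext V
      have h1 : ℓ (-Real.log (𝓛 V)) = 𝓛 V := by
        rw [hE]; simp [Real.exp_log (hSpos V)]
      have h2 := Function.leftInverse_invFun hinj (-Real.log (𝓛 V))
      rw [h1] at h2
      exact h2
    have heuler : ∀ i (V : EuclideanSpace ℝ (Fin k)), fderiv ℝ (p i) V V = L * p i V :=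
      fun i V => lem_euler (hp i) (fun c hc V => hhom i c hc V) V
    have hgrad : ∀ V, (⟪gradient α V, V⟫ : ℝ)
        = L * (∑ i, Real.exp (-(p i V)) * p i V) / 𝓛 V := by
      intro V
      have hterm : ∀ i, HasFDerivAt (fun z => Real.exp (-(p i z)))
          ((-Real.exp (-(p i V))) • fderiv ℝ (p i) V) V := by
        intro i
        have h1 : HasDerivAt (fun u : ℝ => Real.exp (-u)) (-Real.exp (-(p i V))) (p i V) := by
          simpa [Function.comp_def] using (Real.hasDerivAt_exp (-(p i V))).comp (p i V) ((hasDerivAt_id (p i V)).neg)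
        exact h1.comp_hasFDerivAt V ((hp i).differentiable one_ne_zero V).hasFDerivAt
      have hsum : HasFDerivAt (fun z => ∑ i, Real.exp (-(p i z)))
          (∑ i, (-Real.exp (-(p i V))) • fderiv ℝ (p i) V) V :=
        HasFDerivAt.fun_sum fun i _ => hterm i
      have hlog : HasDerivAt (fun y : ℝ => -Real.log y) (-(𝓛 V)⁻¹) (𝓛 V) :=
        (Real.hasDerivAt_log (hSpos V).ne').neg
      have hlog' : HasDerivAt (fun y : ℝ => -Real.log y) (-(𝓛 V)⁻¹)
          ((fun z => ∑ i, Real.exp (-(p i z))) V) := by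
        show HasDerivAt _ _ (∑ i, Real.exp (-(p i V)))
        rw [← hS V]; exact hlog
      have hcomp : HasFDerivAt α
          ((-(𝓛 V)⁻¹) • (∑ i, (-Real.exp (-(p i V))) • fderiv ℝ (p i) V)) V := by
        rw [hαeq]
        have heq : (fun V => -Real.log (𝓛 V))
            = (fun y : ℝ => -Real.log y) ∘ (fun z => ∑ i, Real.exp (-(p i z))) := by
          funext z; simp [hS z, Function.comp]
        rw [heq]
        exact hlog'.comp_hasFDerivAt V hsum
      rw [lem_grad, hcomp.fderiv]
      have happ : ((-(𝓛 V)⁻¹) • (∑ i, (-Real.exp (-(p i V))) • fderiv ℝ (p i) V)) V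
          = (-(𝓛 V)⁻¹) * ∑ i, (-Real.exp (-(p i V))) * (L * p i V) := by
        simp [ContinuousLinearMap.sum_apply, heuler]
      rw [happ]
      have hsumeq : ∑ i, (-Real.exp (-(p i V))) * (L * p i V)
          = -(L * ∑ i, Real.exp (-(p i V)) * p i V) := by
        rw [Finset.mul_sum, ← Finset.sum_neg_distrib]
        exact Finset.sum_congr rfl fun i _ => by ring
      rw [hsumeq]
      field_simp
    refine ⟨L * (2 * n + 2), fun t ht => ?_⟩
    set V := W t with hV
    obtain ⟨hk1, hk2⟩ := lem_exp_key n hn (fun i => p i V) (𝓛 V) (hS V)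
    have hSp := hSpos V
    have hαV : α V = -Real.log (𝓛 V) := by rw [hαeq]
    rw [hgrad V, hαV]
    have heq2 : L * (∑ i, Real.exp (-(p i V)) * p i V) / 𝓛 V - L * (-Real.log (𝓛 V))
        = L * (((∑ i, Real.exp (-(p i V)) * p i V) - 𝓛 V * (-Real.log (𝓛 V))) / 𝓛 V) := by
      field_simp
    rw [heq2, abs_of_nonneg]
    · have h1 : ((∑ i, Real.exp (-(p i V)) * p i V) - 𝓛 V * (-Real.log (𝓛 V))) / 𝓛 V ≤ n := by
        rw [div_le_iff₀ hSp]; linarith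
      nlinarith
    · apply mul_nonneg hL.le (div_nonneg (by linarith) hSp.le)
  · -- logistic loss
    have hS : ∀ V, 𝓛 V = ∑ i, Real.log (1 + Real.exp (-(p i V))) := by
      intro V; rw [h𝓛, hE]
    have hSpos : ∀ V, 0 < 𝓛 V := by
      intro V; rw [hS]
      exact Finset.sum_pos
        (fun i _ => Real.log_pos (by linarith [Real.exp_pos (-(p i V))]))
        ⟨⟨0, hn⟩, Finset.mem_univ _⟩
    have hinj : Function.Injective ℓ := by
      rw [hE]
      have : StrictAnti fun z : ℝ => Real.log (1 + Real.exp (-z)) := by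
        intro x y hxy
        apply Real.log_lt_log (by linarith [Real.exp_pos (-y)])
        have : Real.exp (-y) < Real.exp (-x) := Real.exp_lt_exp.mpr (by linarith)
        linarith
      exact this.injective
    have hTpos : ∀ V, 0 < Real.exp (𝓛 V) - 1 := by
      intro V
      nlinarith [Real.add_one_le_exp (𝓛 V), hSpos V]
    have hαeq : α = fun V => -Real.log (Real.exp (𝓛 V) - 1) := by
      rw [hα]; funext V
      have h1 : ℓ (-Real.log (Real.exp (𝓛 V) - 1)) = 𝓛 V := by
        rw [hE]; simp only [neg_neg]
        rw [Real.exp_log (hTpos V)]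
        rw [show (1 : ℝ) + (Real.exp (𝓛 V) - 1) = Real.exp (𝓛 V) by ring, Real.log_exp]
      have h2 := Function.leftInverse_invFun hinj (-Real.log (Real.exp (𝓛 V) - 1))
      rw [h1] at h2
      exact h2
    have heuler : ∀ i (V : EuclideanSpace ℝ (Fin k)), fderiv ℝ (p i) V V = L * p i V :=
      fun i V => lem_euler (hp i) (fun c hc V => hhom i c hc V) V
    have hgrad : ∀ V, (⟪gradient α V, V⟫ : ℝ)
        = (Real.exp (𝓛 V) - 1)⁻¹ * Real.exp (𝓛 V)
          * (L * ∑ i, (Real.exp (-(p i V)) / (1 + Real.exp (-(p i V)))) * p i V) := by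
      intro V
      have h1px : ∀ (i : Fin n), (0:ℝ) < 1 + Real.exp (-(p i V)) :=
        fun i => by linarith [Real.exp_pos (-(p i V))]
      have hterm : ∀ i, HasFDerivAt (fun z => Real.log (1 + Real.exp (-(p i z))))
          (((1 + Real.exp (-(p i V)))⁻¹ * (-Real.exp (-(p i V)))) • fderiv ℝ (p i) V) V := by
        intro i
        have hu : HasDerivAt (fun u : ℝ => 1 + Real.exp (-u)) (-Real.exp (-(p i V))) (p i V) := by
          simpa using (((Real.hasDerivAt_exp (-(p i V))).comp (p i V)
            ((hasDerivAt_id (p i V)).neg)).const_add 1)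
        have hlg : HasDerivAt Real.log (1 + Real.exp (-(p i V)))⁻¹
            ((fun u : ℝ => 1 + Real.exp (-u)) (p i V)) := by
          show HasDerivAt Real.log (1 + Real.exp (-(p i V)))⁻¹ (1 + Real.exp (-(p i V)))
          exact Real.hasDerivAt_log (h1px i).ne'
        have h1 := hlg.comp (p i V) hu
        have h1' : HasDerivAt (fun u : ℝ => Real.log (1 + Real.exp (-u)))
            ((1 + Real.exp (-(p i V)))⁻¹ * (-Real.exp (-(p i V)))) (p i V) := h1
        exact h1'.comp_hasFDerivAt V ((hp i).differentiable one_ne_zero V).hasFDerivAt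
      have hsum : HasFDerivAt (fun z => ∑ i, Real.log (1 + Real.exp (-(p i z))))
          (∑ i, ((1 + Real.exp (-(p i V)))⁻¹ * (-Real.exp (-(p i V)))) • fderiv ℝ (p i) V) V :=
        HasFDerivAt.fun_sum fun i _ => hterm i
      have hg : HasDerivAt (fun y : ℝ => Real.exp y - 1) (Real.exp (𝓛 V)) (𝓛 V) :=
        (Real.hasDerivAt_exp (𝓛 V)).sub_const 1
      have hlg2 : HasDerivAt Real.log (Real.exp (𝓛 V) - 1)⁻¹
          ((fun y : ℝ => Real.exp y - 1) (𝓛 V)) := by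
        show HasDerivAt Real.log (Real.exp (𝓛 V) - 1)⁻¹ (Real.exp (𝓛 V) - 1)
        exact Real.hasDerivAt_log (hTpos V).ne'
      have hF : HasDerivAt (fun y : ℝ => -Real.log (Real.exp y - 1))
          (-((Real.exp (𝓛 V) - 1)⁻¹ * Real.exp (𝓛 V))) (𝓛 V) := by
        have := (hlg2.comp (𝓛 V) hg).neg
        exact this
      have hF' : HasDerivAt (fun y : ℝ => -Real.log (Real.exp y - 1))
          (-((Real.exp (𝓛 V) - 1)⁻¹ * Real.exp (𝓛 V)))
          ((fun z => ∑ i, Real.log (1 + Real.exp (-(p i z)))) V) := by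
        show HasDerivAt _ _ (∑ i, Real.log (1 + Real.exp (-(p i V))))
        rw [← hS V]; exact hF
      have hcomp : HasFDerivAt α
          ((-((Real.exp (𝓛 V) - 1)⁻¹ * Real.exp (𝓛 V)))
            • (∑ i, ((1 + Real.exp (-(p i V)))⁻¹ * (-Real.exp (-(p i V)))) • fderiv ℝ (p i) V)) V := by
        rw [hαeq]
        have heq : (fun V => -Real.log (Real.exp (𝓛 V) - 1))
            = (fun y : ℝ => -Real.log (Real.exp y - 1))
              ∘ (fun z => ∑ i, Real.log (1 + Real.exp (-(p i z)))) := by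
          funext z; simp [hS z, Function.comp]
        rw [heq]
        exact hF'.comp_hasFDerivAt V hsum
      rw [lem_grad, hcomp.fderiv]
      have happ : ((-((Real.exp (𝓛 V) - 1)⁻¹ * Real.exp (𝓛 V)))
            • (∑ i, ((1 + Real.exp (-(p i V)))⁻¹ * (-Real.exp (-(p i V)))) • fderiv ℝ (p i) V)) V
          = (-((Real.exp (𝓛 V) - 1)⁻¹ * Real.exp (𝓛 V)))
            * ∑ i, ((1 + Real.exp (-(p i V)))⁻¹ * (-Real.exp (-(p i V)))) * (L * p i V) := by
        simp [ContinuousLinearMap.sum_apply, heuler]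
      rw [happ]
      have hsumeq : ∑ i, ((1 + Real.exp (-(p i V)))⁻¹ * (-Real.exp (-(p i V)))) * (L * p i V)
          = -(L * ∑ i, (Real.exp (-(p i V)) / (1 + Real.exp (-(p i V)))) * p i V) := by
        rw [Finset.mul_sum, ← Finset.sum_neg_distrib]
        refine Finset.sum_congr rfl fun i _ => ?_
        rw [div_eq_mul_inv]; ring
      rw [hsumeq]
      ring
    refine ⟨L * (2 * n + 2), fun t ht => ?_⟩
    set V := W t with hV
    have hℓ0 : ℓ 0 = Real.log 2 := by rw [hE]; norm_num
    have hS2 : 𝓛 V < Real.log 2 := by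
      have := hWloss t ht; rwa [hℓ0] at this
    obtain ⟨hk1, hk2⟩ := lem_log_key n hn (fun i => p i V) (𝓛 V) (hS V) hS2
    have hSp := hSpos V
    have hTp := hTpos V
    have hexp1 : Real.exp (𝓛 V) * Real.exp (-(𝓛 V)) = 1 := by rw [← Real.exp_add]; simp
    have hDpos : 0 < 1 - Real.exp (-(𝓛 V)) := by
      have : Real.exp (-(𝓛 V)) < 1 := Real.exp_lt_one_iff.mpr (by linarith)
      linarith
    have hc : (Real.exp (𝓛 V) - 1)⁻¹ * Real.exp (𝓛 V) = (1 - Real.exp (-(𝓛 V)))⁻¹ := by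
      rw [show Real.exp (𝓛 V) - 1 = Real.exp (𝓛 V) * (1 - Real.exp (-(𝓛 V))) by nlinarith]
      rw [mul_inv]
      field_simp
    have hαV : α V = -Real.log (Real.exp (𝓛 V) - 1) := by rw [hαeq]
    rw [hgrad V, hαV, hc]
    set D : ℝ := 1 - Real.exp (-(𝓛 V)) with hD
    set A : ℝ := -Real.log (Real.exp (𝓛 V) - 1) with hA
    set SS : ℝ := ∑ i, (Real.exp (-(p i V)) / (1 + Real.exp (-(p i V)))) * p i V with hSS
    have heq2 : D⁻¹ * (L * SS) - L * A = L * ((SS - D * A) / D) := by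
      field_simp
    rw [heq2, abs_of_nonneg]
    · have h1 : (SS - D * A) / D ≤ 2 * n + 2 := by
        rw [div_le_iff₀ hDpos]; nlinarith
      nlinarith
    · apply mul_nonneg hL.le (div_nonneg (by linarith) hDpos.le)
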